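/- Let X and U be finite-dimensional real normed vector spaces and let A : X → X and B : U → X be linear maps. Suppose there exist a linear map F : X → U and constants M ≥ 1, ρ ∈ (0,1) such that ‖(A + B∘F)^t z‖ ≤ M·ρ^t·‖z‖ for all t ∈ ℕ and all z ∈ X. Then there exist an integer N ≥ 1, a real number α ∈ (0,1), and positive real numbers σ_1, …, σ_N with σ_1 + ⋯ + σ_N ≥ 1 such that for every x̄ ∈ X there exist an input sequence ν_0, …, ν_{N−1} in U and states x_0, x_1, …, x_N in X with x_0 = x̄, x_{k+1} = A x_k + B ν_k for all 0 ≤ k < N, and Σ_{k=1}^N σ_k·‖x_k‖ ≤ (1−α)·‖x̄‖. -/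
import Mathlib


/-- Remark 2: If the LTI system x(t+1) = A x(t) + B u(t) is
exponentially stabilizable by a linear state feedback F, then there are a horizon
N ≥ 1, a decay constant α ∈ (0,1), and positive weights σ₁,…,σ_N summing to at
least 1 such that from every initial state x̄ some predicted input sequence makes
the norm function satisfy the average descent condition. -/
theorem stmt_4 (X U : Type*)
    [NormedAddCommGroup X] [NormedSpace ℝ X] [FiniteDimensional ℝ X]
    [NormedAddCommGroup U] [NormedSpace ℝ U] [FiniteDimensional ℝ U]
    (A : X →ₗ[ℝ] X) (B : U →ₗ[ℝ] X)
    (F : X →ₗ[ℝ] U) (M ρ : ℝ) (hM : 1 ≤ M) (hρ0 : 0 < ρ) (hρ1 : ρ < 1)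
    (hstab : ∀ (t : ℕ) (z : X), ‖((A + B ∘ₗ F) ^ t) z‖ ≤ M * ρ ^ t * ‖z‖) :
    ∃ N : ℕ, 1 ≤ N ∧ ∃ α ∈ Set.Ioo (0 : ℝ) 1, ∃ σ : ℕ → ℝ,
      (∀ k ∈ Finset.Icc 1 N, 0 < σ k) ∧
      1 ≤ ∑ k ∈ Finset.Icc 1 N, σ k ∧
      ∀ xbar : X, ∃ (ν : ℕ → U) (x : ℕ → X),
        x 0 = xbar ∧
        (∀ k < N, x (k + 1) = A (x k) + B (ν k)) ∧
        ∑ k ∈ Finset.Icc 1 N, σ k * ‖x k‖ ≤ (1 - α) * ‖xbar‖ := by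
  set L := A + B ∘ₗ F with hL
  set N : ℕ := ⌈2 * M * ρ / (1 - ρ)⌉₊ + 1 with hN
  have hN1 : 1 ≤ N := Nat.le_add_left 1 _
  have hNpos : (0 : ℝ) < N := by positivity
  have h1ρ : (0 : ℝ) < 1 - ρ := by linarith
  have hNge : 2 * M * ρ / (1 - ρ) ≤ (N : ℝ) := by
    have := Nat.le_ceil (2 * M * ρ / (1 - ρ))
    push_cast [hN]
    linarith
  refine ⟨N, hN1, 1/2, ⟨by norm_num, by norm_num⟩, fun _ => (N : ℝ)⁻¹, ?_, ?_, ?_⟩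
  · intro k _; positivity
  · rw [Finset.sum_const, Nat.card_Icc]
    simp only [Nat.add_sub_cancel, nsmul_eq_mul]
    rw [mul_inv_cancel₀ (ne_of_gt hNpos)]
  · intro xbar
    refine ⟨fun k => F ((L ^ k) xbar), fun k => (L ^ k) xbar, by simp, ?_, ?_⟩
    · intro k _
      show (L ^ (k + 1)) xbar = A ((L ^ k) xbar) + B (F ((L ^ k) xbar))
      rw [pow_succ' L k]
      simp [hL, Module.End.mul_apply, LinearMap.add_apply, LinearMap.comp_apply]
    · have hsum : ∑ k ∈ Finset.Icc 1 N, (N : ℝ)⁻¹ * ‖(L ^ k) xbar‖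
          ≤ ∑ k ∈ Finset.Icc 1 N, (N : ℝ)⁻¹ * (M * ρ ^ k * ‖xbar‖) := by
        apply Finset.sum_le_sum
        intro k _
        exact mul_le_mul_of_nonneg_left (hstab k xbar) (by positivity)
      have hgeom : ∑ k ∈ Finset.Icc 1 N, ρ ^ k ≤ ρ / (1 - ρ) := by
        have h1 : ∑ k ∈ Finset.Icc 1 N, ρ ^ k = ρ * ∑ k ∈ Finset.range N, ρ ^ k := by
          rw [show Finset.Icc 1 N = Finset.Ico 1 (N + 1) by
            rw [Finset.Ico_add_one_right_eq_Icc]]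
          rw [Finset.sum_Ico_eq_sum_range]
          simp only [Nat.add_sub_cancel]
          rw [Finset.mul_sum]
          apply Finset.sum_congr rfl
          intro i _
          rw [pow_add, pow_one, mul_comm]
        rw [h1]
        have h2 : ∑ k ∈ Finset.range N, ρ ^ k ≤ 1 / (1 - ρ) := by
          rw [geom_sum_eq (ne_of_lt hρ1) N]
          have heq : (ρ ^ N - 1) / (ρ - 1) = (1 - ρ ^ N) / (1 - ρ) := by
            rw [div_eq_div_iff (by linarith) (by linarith)]
            ring
          rw [heq]
          gcongr
          nlinarith [pow_nonneg (le_of_lt hρ0) N]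
        calc ρ * ∑ k ∈ Finset.range N, ρ ^ k ≤ ρ * (1 / (1 - ρ)) :=
              mul_le_mul_of_nonneg_left h2 (le_of_lt hρ0)
          _ = ρ / (1 - ρ) := by ring
      have hx : (0:ℝ) ≤ ‖xbar‖ := norm_nonneg _
      have h3 : M * (ρ / (1 - ρ)) ≤ (N : ℝ) / 2 := by
        rw [div_le_iff₀ h1ρ] at hNge
        rw [mul_div_assoc', div_le_div_iff₀ h1ρ (by norm_num : (0:ℝ) < 2)]
        nlinarith
      have key : (N : ℝ)⁻¹ * (M * (ρ / (1 - ρ))) ≤ 1/2 := by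
        calc (N : ℝ)⁻¹ * (M * (ρ / (1 - ρ))) ≤ (N:ℝ)⁻¹ * ((N:ℝ)/2) :=
              mul_le_mul_of_nonneg_left h3 (by positivity)
          _ = 1/2 := by field_simp
      calc ∑ k ∈ Finset.Icc 1 N, (N : ℝ)⁻¹ * ‖(L ^ k) xbar‖
          ≤ ∑ k ∈ Finset.Icc 1 N, (N : ℝ)⁻¹ * (M * ρ ^ k * ‖xbar‖) := hsum
        _ = (N : ℝ)⁻¹ * M * ‖xbar‖ * ∑ k ∈ Finset.Icc 1 N, ρ ^ k := by
            rw [Finset.mul_sum]; apply Finset.sum_congr rfl; intro k _; ring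
        _ ≤ (N : ℝ)⁻¹ * M * ‖xbar‖ * (ρ / (1 - ρ)) := by
            apply mul_le_mul_of_nonneg_left hgeom (by positivity)
        _ = ((N : ℝ)⁻¹ * (M * (ρ / (1 - ρ)))) * ‖xbar‖ := by ring
        _ ≤ (1/2) * ‖xbar‖ := mul_le_mul_of_nonneg_right key hx
        _ = (1 - 1/2) * ‖xbar‖ := by norm_num
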